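/- Let φ : G → K be a surjective group homomorphism between finite groups. If (g₁, ..., g_k) is a smooth generating sequence for G, then (φ(g₁), ..., φ(g_k)) is a smooth generating sequence for K. -/

import Mathlib

theorem stmt5 {G K : Type*} [Group G] [Group K] [Finite G] [Finite K]
    (φ : G →* K) (hφ : Function.Surjective φ)
    (k : ℕ) (g : Fin k → G)
    (hgen : Subgroup.closure (Set.range g) = ⊤)
    (hsmooth : ∀ i : ℕ, i < k →
      (Subgroup.closure (g '' {j : Fin k | (j : ℕ) < i})).relIndex
        (Subgroup.closure (g '' {j : Fin k | (j : ℕ) < i + 1})) ≤ 2) :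
    Subgroup.closure (Set.range (φ ∘ g)) = ⊤ ∧
    ∀ i : ℕ, i < k →
      (Subgroup.closure ((φ ∘ g) '' {j : Fin k | (j : ℕ) < i})).relIndex
        (Subgroup.closure ((φ ∘ g) '' {j : Fin k | (j : ℕ) < i + 1})) ≤ 2 := by
  constructor
  · rw [Set.range_comp, ← MonoidHom.map_closure, hgen]
    rw [← MonoidHom.range_eq_map, MonoidHom.range_eq_top]
    exact hφ
  · intro i hi
    set A := Subgroup.closure (g '' {j : Fin k | (j : ℕ) < i}) with hA
    set B := Subgroup.closure (g '' {j : Fin k | (j : ℕ) < i + 1}) with hB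
    have h1 : (φ ∘ g) '' {j : Fin k | (j : ℕ) < i} = φ '' (g '' {j : Fin k | (j : ℕ) < i}) :=
      (Set.image_comp φ g _)
    have h2 : (φ ∘ g) '' {j : Fin k | (j : ℕ) < i + 1} =
        φ '' (g '' {j : Fin k | (j : ℕ) < i + 1}) := (Set.image_comp φ g _)
    rw [h1, h2, ← MonoidHom.map_closure, ← MonoidHom.map_closure, ← hA, ← hB]
    have key : (A.map φ).relIndex (B.map φ) = ((A.map φ).comap φ).relIndex B := by
      rw [Subgroup.relIndex_comap]
    have hle : A ≤ (A.map φ).comap φ := Subgroup.le_comap_map φ A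
    have hdvd : ((A.map φ).comap φ).relIndex B ∣ A.relIndex B :=
      Subgroup.relIndex_dvd_of_le_left B hle
    have hpos : 0 < A.relIndex B := Nat.pos_of_ne_zero (by rw [Subgroup.relIndex]; exact Subgroup.index_ne_zero_of_finite)
    calc (A.map φ).relIndex (B.map φ) = ((A.map φ).comap φ).relIndex B := key
      _ ≤ A.relIndex B := Nat.le_of_dvd hpos hdvd
      _ ≤ 2 := hsmooth i hi
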